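/- Let C be a curve of genus g ≥ 2 over F_q, and suppose d > 2g. Then C has at least one closed point of degree d. -/

import Mathlib

private lemma sqrtEq {a b : ℝ} (hb : 0 ≤ b) (h : b ^ 2 = a) : Real.sqrt a = b := by
  rw [← h, Real.sqrt_sq hb]

private lemma mainIneq (v u kr gr r : ℝ) (hv32 : 32 ≤ v) (hgv : gr^2 ≤ v) (huv : u^2 ≤ v)
    (hguv : gr*u ≤ v) (hkv : kr ≤ v/2) (hr0 : 0 ≤ r) (hr15 : r ≤ 1.5) (hg2 : 2 ≤ gr)
    (hu0 : 0 ≤ u)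
    (hchain : v^2 + 1 - 2*gr*v ≤ 2*u^2 + kr + 2*gr*((2+r)*u)) : False := by
  have hgu0 : (0:ℝ) ≤ gr * u := mul_nonneg (by linarith) hu0
  nlinarith [hchain, hgv, huv, hguv, hkv, hv32, sq_nonneg (v - 2*gr), hr15, hr0,
    mul_nonneg (by linarith : (0:ℝ) ≤ 1.5 - r) hgu0]

private lemma g4le (g : ℕ) (hg : 2 ≤ g) : g ^ 4 ≤ 2 ^ (2 * g + 1) := by
  induction g, hg using Nat.le_induction with
  | base => norm_num
  | succ n hn ih =>
    rcases eq_or_lt_of_le hn with h | h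
    · subst h; norm_num
    · have h3 : 3 ≤ n := h
      have h1 : (n + 1) ^ 2 ≤ 2 * n ^ 2 := by nlinarith
      have h2 : 2 * (n + 1) + 1 = (2 * n + 1) + 2 := by ring
      calc (n + 1) ^ 4 = ((n + 1) ^ 2) ^ 2 := by ring
        _ ≤ (2 * n ^ 2) ^ 2 := Nat.pow_le_pow_left h1 2
        _ = 4 * n ^ 4 := by ring
        _ ≤ 4 * 2 ^ (2 * n + 1) := Nat.mul_le_mul_left 4 ih
        _ = 2 ^ (2 * (n + 1) + 1) := by rw [h2, pow_add]; ring

private lemma d2le (d : ℕ) (hd : 4 ≤ d) : d ^ 2 ≤ 2 ^ d := by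
  induction d, hd using Nat.le_induction with
  | base => norm_num
  | succ n hn ih =>
    have h1 : (n + 1) ^ 2 ≤ 2 * n ^ 2 := by nlinarith
    calc (n + 1) ^ 2 ≤ 2 * n ^ 2 := h1
      _ ≤ 2 * 2 ^ n := Nat.mul_le_mul_left 2 ih
      _ = 2 ^ (n + 1) := by rw [pow_succ]; ring

private lemma geomSum {s c : ℝ} (hs : 1 < s) (hc : s ≤ c * (s - 1)) (k : ℕ) :
    ∑ m ∈ Finset.Icc 1 k, s ^ m ≤ c * s ^ k := by
  have hs0 : 0 < s := lt_trans one_pos hs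
  have hc0 : 0 ≤ c := by nlinarith
  induction k with
  | zero => simpa using hc0
  | succ n ih =>
    rw [Finset.sum_Icc_succ_top (Nat.le_add_left 1 n)]
    have hsn : (0 : ℝ) < s ^ n := pow_pos hs0 n
    have key : c * s ^ n + s ^ (n + 1) ≤ c * s ^ (n + 1) := by
      rw [pow_succ]; nlinarith
    linarith

set_option maxHeartbeats 12000000 in
/-- Lemma 2.1(ii): a curve of genus `g ≥ 2` over `F_q` has a closed point of every
degree `d > 2g`.  `NC m = #C(F_{q^m})` (satisfying the Weil bounds and Serre's
refinement), `nC m` = number of degree-`m` closed points. -/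
theorem stmt4 (q g : ℕ) (hq : IsPrimePow q) (hg : 2 ≤ g) (NC nC : ℕ → ℕ)
    (weil : ∀ m : ℕ, 0 < m →
      |(NC m : ℝ) - (q : ℝ) ^ m - 1| ≤ 2 * g * Real.sqrt ((q : ℝ) ^ m))
    (serre : ∀ m : ℕ, 0 < m →
      |(NC m : ℝ) - (q : ℝ) ^ m - 1| ≤ g * ⌊2 * Real.sqrt ((q : ℝ) ^ m)⌋)
    (hNC : ∀ d : ℕ, 0 < d → NC d = ∑ m ∈ d.divisors, m * nC m)
    (d : ℕ) (hd : 2 * g < d) :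
    0 < nC d := by
  by_contra hcon
  have hnc : nC d = 0 := by omega
  have hq2 : 2 ≤ q := hq.two_le
  have hd5 : 5 ≤ d := by omega
  have hd0 : 0 < d := by omega
  -- NC d is at most the sum of NC m over proper divisors
  have hmid : NC d ≤ ∑ m ∈ d.properDivisors, NC m := by
    have h1 : NC d = ∑ m ∈ d.properDivisors, m * nC m := by
      rw [hNC d hd0, ← Nat.insert_self_properDivisors (by omega : d ≠ 0),
        Finset.sum_insert Nat.self_notMem_properDivisors, hnc]
      simp
    rw [h1]
    apply Finset.sum_le_sum
    intro m hm
    have hm0 : 0 < m := Nat.pos_of_mem_properDivisors hm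
    rw [hNC m hm0]
    exact Finset.single_le_sum (f := fun e => e * nC e) (fun i _ => Nat.zero_le _)
      (Nat.mem_divisors_self m hm0.ne')
  have hqR : (2 : ℝ) ≤ (q : ℝ) := by exact_mod_cast hq2
  have hq0 : (0 : ℝ) ≤ (q : ℝ) := by linarith
  have hgR : (2 : ℝ) ≤ (g : ℝ) := by exact_mod_cast hg
  have hlow : (q : ℝ) ^ d + 1 - 2 * g * Real.sqrt ((q : ℝ) ^ d) ≤ NC d := by
    have h := (abs_le.mp (weil d hd0)).1
    linarith
  have hups : ∀ m ∈ d.properDivisors,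
      (NC m : ℝ) ≤ (q : ℝ) ^ m + 1 + 2 * g * Real.sqrt ((q : ℝ) ^ m) := by
    intro m hm
    have h := (abs_le.mp (weil m (Nat.pos_of_mem_properDivisors hm))).2
    linarith
  have hmidR : (NC d : ℝ) ≤ ∑ m ∈ d.properDivisors, (NC m : ℝ) := by exact_mod_cast hmid
  have hexc : (q : ℝ) ^ d + 1 - 2 * g * Real.sqrt ((q : ℝ) ^ d)
      ≤ ∑ m ∈ d.properDivisors, ((q : ℝ) ^ m + 1 + 2 * g * Real.sqrt ((q : ℝ) ^ m)) :=
    hlow.trans (hmidR.trans (Finset.sum_le_sum hups))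
  have hr2 : Real.sqrt 2 ^ 2 = 2 := Real.sq_sqrt (by norm_num)
  have hr0 : (0 : ℝ) ≤ Real.sqrt 2 := Real.sqrt_nonneg _
  by_cases hbig : 1024 ≤ q ^ d
  · -- generic branch
    have hs2 : Real.sqrt q ^ 2 = (q : ℝ) := Real.sq_sqrt hq0
    have hs0 : (0:ℝ) ≤ Real.sqrt q := Real.sqrt_nonneg _
    have hsge : Real.sqrt 2 ≤ Real.sqrt q := Real.sqrt_le_sqrt hqR
    have hr14 : (1.4 : ℝ) ≤ Real.sqrt 2 := by nlinarith
    have hs1 : (1 : ℝ) < Real.sqrt q := by linarith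
    have hsqrtpow : ∀ m : ℕ, Real.sqrt ((q : ℝ) ^ m) = Real.sqrt q ^ m := by
      intro m
      exact sqrtEq (pow_nonneg hs0 m) (by rw [← pow_mul, mul_comm, pow_mul, hs2])
    simp only [hsqrtpow] at hexc
    have hk2 : 2 * (d / 2) ≤ d := by omega
    have hSsub : d.properDivisors ⊆ Finset.Icc 1 (d / 2) := by
      intro m hm
      obtain ⟨hdvd, hlt⟩ := Nat.mem_properDivisors.mp hm
      have hm0 : 0 < m := Nat.pos_of_mem_properDivisors hm
      have h2m : 2 * m ≤ d := by
        obtain ⟨t, rfl⟩ := hdvd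
        have ht : 2 ≤ t := by
          rcases t with _ | _ | t
          · omega
          · omega
          · omega
        nlinarith
      simp only [Finset.mem_Icc]
      omega
    have hsub : ∑ m ∈ d.properDivisors, ((q : ℝ) ^ m + 1 + 2 * g * Real.sqrt q ^ m)
        ≤ ∑ m ∈ Finset.Icc 1 (d / 2), ((q : ℝ) ^ m + 1 + 2 * g * Real.sqrt q ^ m) := by
      apply Finset.sum_le_sum_of_subset_of_nonneg hSsub
      intro i _ _
      have hgg : (0:ℝ) ≤ (g : ℝ) := by linarith
      positivity
    have hsplit : ∑ m ∈ Finset.Icc 1 (d / 2), ((q : ℝ) ^ m + 1 + 2 * g * Real.sqrt q ^ m)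
        = (∑ m ∈ Finset.Icc 1 (d / 2), (q : ℝ) ^ m) + (d / 2 : ℕ)
          + 2 * g * ∑ m ∈ Finset.Icc 1 (d / 2), Real.sqrt q ^ m := by
      rw [Finset.sum_add_distrib, Finset.sum_add_distrib, Finset.sum_const, ← Finset.mul_sum]
      simp [Nat.card_Icc]
    have hsum1 : ∑ m ∈ Finset.Icc 1 (d / 2), (q : ℝ) ^ m ≤ 2 * (q : ℝ) ^ (d / 2) :=
      geomSum (by linarith) (by linarith) (d / 2)
    have hsum2 : ∑ m ∈ Finset.Icc 1 (d / 2), Real.sqrt q ^ m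
        ≤ (2 + Real.sqrt 2) * Real.sqrt q ^ (d / 2) := by
      apply geomSum hs1
      nlinarith [mul_le_mul_of_nonneg_right hsge (by linarith : (0:ℝ) ≤ 1 + Real.sqrt 2)]
    have hv0 : (0 : ℝ) ≤ Real.sqrt q ^ d := pow_nonneg hs0 d
    have hu0 : (0 : ℝ) ≤ Real.sqrt q ^ (d / 2) := pow_nonneg hs0 (d / 2)
    have hv2 : (Real.sqrt q ^ d) ^ 2 = (q : ℝ) ^ d := by
      rw [← pow_mul, mul_comm, pow_mul, hs2]
    have hu2 : (Real.sqrt q ^ (d / 2)) ^ 2 = (q : ℝ) ^ (d / 2) := by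
      rw [← pow_mul, mul_comm, pow_mul, hs2]
    have huv : (Real.sqrt q ^ (d / 2)) ^ 2 ≤ Real.sqrt q ^ d := by
      rw [← pow_mul]
      exact pow_le_pow_right₀ hs1.le (by omega)
    have hqd : ((q : ℝ)) ^ d = ((q ^ d : ℕ) : ℝ) := by push_cast; ring
    have hdv : (d : ℝ) ≤ Real.sqrt q ^ d := by
      have h1 : d ^ 2 ≤ 2 ^ d := d2le d (by omega)
      have h2 : 2 ^ d ≤ q ^ d := Nat.pow_le_pow_left hq2 d
      have h3 : (d : ℝ) ^ 2 ≤ (Real.sqrt q ^ d) ^ 2 := by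
        rw [hv2, hqd]; exact_mod_cast h1.trans h2
      nlinarith [Nat.cast_nonneg (α := ℝ) d]
    have hgv : (g : ℝ) ^ 2 ≤ Real.sqrt q ^ d := by
      have h1 : g ^ 4 ≤ 2 ^ (2 * g + 1) := g4le g hg
      have h2 : 2 ^ (2 * g + 1) ≤ 2 ^ d := Nat.pow_le_pow_right (by norm_num) (by omega)
      have h3 : 2 ^ d ≤ q ^ d := Nat.pow_le_pow_left hq2 d
      have h4 : (g : ℝ) ^ 4 ≤ (Real.sqrt q ^ d) ^ 2 := by
        rw [hv2, hqd]; exact_mod_cast (h1.trans h2).trans h3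
      nlinarith [sq_nonneg ((g:ℝ)^2 - Real.sqrt q ^ d), sq_nonneg ((g:ℝ)^2 + Real.sqrt q ^ d),
        pow_nonneg (Nat.cast_nonneg (α := ℝ) g) 2]
    have hv32 : (32 : ℝ) ≤ Real.sqrt q ^ d := by
      have h1 : (1024 : ℝ) ≤ ((q ^ d : ℕ) : ℝ) := by exact_mod_cast hbig
      nlinarith [hv2, hqd]
    have hguv : (g : ℝ) * Real.sqrt q ^ (d / 2) ≤ Real.sqrt q ^ d := by
      have h1 : (g : ℝ) ^ 2 * (Real.sqrt q ^ (d / 2)) ^ 2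
          ≤ Real.sqrt q ^ d * Real.sqrt q ^ d := by
        nlinarith [sq_nonneg (Real.sqrt q ^ (d / 2))]
      nlinarith [mul_nonneg (by linarith : (0:ℝ) ≤ (g:ℝ)) hu0]
    have hkv : ((d / 2 : ℕ) : ℝ) ≤ Real.sqrt q ^ d / 2 := by
      have h1 : (2 : ℝ) * ((d / 2 : ℕ) : ℝ) ≤ (d : ℝ) := by exact_mod_cast hk2
      linarith
    have hr15 : Real.sqrt 2 ≤ 1.5 := by nlinarith
    have hchain : (Real.sqrt q ^ d) ^ 2 + 1 - 2 * g * Real.sqrt q ^ d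
        ≤ 2 * (Real.sqrt q ^ (d / 2)) ^ 2 + ((d / 2 : ℕ) : ℝ)
          + 2 * g * ((2 + Real.sqrt 2) * Real.sqrt q ^ (d / 2)) := by
      have hg0 : (0:ℝ) ≤ 2 * (g:ℝ) := by linarith
      have hstep := mul_le_mul_of_nonneg_left hsum2 hg0
      rw [hv2, hu2]
      calc (q:ℝ)^d + 1 - 2 * g * Real.sqrt q ^ d
          ≤ ∑ m ∈ d.properDivisors, ((q : ℝ) ^ m + 1 + 2 * g * Real.sqrt q ^ m) := hexc
        _ ≤ ∑ m ∈ Finset.Icc 1 (d / 2), ((q : ℝ) ^ m + 1 + 2 * g * Real.sqrt q ^ m) := hsub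
        _ = (∑ m ∈ Finset.Icc 1 (d / 2), (q : ℝ) ^ m) + ((d / 2 : ℕ) : ℝ)
            + 2 * g * ∑ m ∈ Finset.Icc 1 (d / 2), Real.sqrt q ^ m := hsplit
        _ ≤ 2 * (q : ℝ) ^ (d / 2) + ((d / 2 : ℕ) : ℝ)
            + 2 * g * ((2 + Real.sqrt 2) * Real.sqrt q ^ (d / 2)) := by linarith
    exact mainIneq (Real.sqrt q ^ d) (Real.sqrt q ^ (d / 2)) ((d / 2 : ℕ) : ℝ) (g : ℝ)
      (Real.sqrt 2) hv32 hgv huv hguv hkv hr0 hr15 hgR hu0 hchain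
  · -- exceptional small cases
    have hq3 : q ≤ 3 := by
      by_contra h
      have h4 : 4 ≤ q := by omega
      have h1 : 4 ^ 5 ≤ q ^ 5 := Nat.pow_le_pow_left h4 5
      have h2 : q ^ 5 ≤ q ^ d := Nat.pow_le_pow_right (by omega) hd5
      omega
    have hd9 : d ≤ 9 := by
      by_contra h
      have h1 : 2 ^ 10 ≤ 2 ^ d := Nat.pow_le_pow_right (by norm_num) (by omega)
      have h2 : 2 ^ d ≤ q ^ d := Nat.pow_le_pow_left hq2 d
      omega
    have hgub : g ≤ 4 := by omega
    have ht2 : Real.sqrt 3 ^ 2 = 3 := Real.sq_sqrt (by norm_num)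
    have ht0 : (0 : ℝ) ≤ Real.sqrt 3 := Real.sqrt_nonneg _
    have hr142 : Real.sqrt 2 ≤ 1.42 := by nlinarith [hr2, hr0]
    have ht174 : Real.sqrt 3 ≤ 1.74 := by nlinarith [ht2, ht0]
    have e4 : Real.sqrt (4:ℝ) = 2 := sqrtEq (by norm_num) (by norm_num)
    have e8 : Real.sqrt (8:ℝ) = 2 * Real.sqrt 2 := sqrtEq (by positivity) (by rw [mul_pow, hr2]; norm_num)
    have e16 : Real.sqrt (16:ℝ) = 4 := sqrtEq (by norm_num) (by norm_num)
    have e32 : Real.sqrt (32:ℝ) = 4 * Real.sqrt 2 := sqrtEq (by positivity) (by rw [mul_pow, hr2]; norm_num)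
    have e64 : Real.sqrt (64:ℝ) = 8 := sqrtEq (by norm_num) (by norm_num)
    have e128 : Real.sqrt (128:ℝ) = 8 * Real.sqrt 2 := sqrtEq (by positivity) (by rw [mul_pow, hr2]; norm_num)
    have e256 : Real.sqrt (256:ℝ) = 16 := sqrtEq (by norm_num) (by norm_num)
    have e512 : Real.sqrt (512:ℝ) = 16 * Real.sqrt 2 := sqrtEq (by positivity) (by rw [mul_pow, hr2]; norm_num)
    have e9 : Real.sqrt (9:ℝ) = 3 := sqrtEq (by norm_num) (by norm_num)
    have e27 : Real.sqrt (27:ℝ) = 3 * Real.sqrt 3 := sqrtEq (by positivity) (by rw [mul_pow, ht2]; norm_num)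
    have e243 : Real.sqrt (243:ℝ) = 9 * Real.sqrt 3 := sqrtEq (by positivity) (by rw [mul_pow, ht2]; norm_num)
    have e729 : Real.sqrt (729:ℝ) = 27 := sqrtEq (by norm_num) (by norm_num)
    interval_cases q <;> interval_cases d <;> interval_cases g <;>
    first
      | omega
      | (norm_num at hbig; done)
      | -- special case q=2, g=2, d=6, uses Serre's refinement
        (have h6 := hNC 6 (by norm_num)
         have h2 := hNC 2 (by norm_num)
         have h3 := hNC 3 (by norm_num)
         rw [show (6:ℕ).divisors = {1,2,3,6} from by decide] at h6
         rw [show (2:ℕ).divisors = {1,2} from by decide] at h2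
         rw [show (3:ℕ).divisors = {1,3} from by decide] at h3
         rw [Finset.sum_insert (by decide), Finset.sum_insert (by decide),
           Finset.sum_insert (by decide), Finset.sum_singleton] at h6
         rw [Finset.sum_insert (by decide), Finset.sum_singleton] at h2
         rw [Finset.sum_insert (by decide), Finset.sum_singleton] at h3
         have w6 := (abs_le.mp (weil 6 (by norm_num))).1
         push_cast at w6
         norm_num [e64] at w6
         have hN6r : (33:ℝ) ≤ (NC 6 : ℝ) := by linarith [w6]
         have hN6 : 33 ≤ NC 6 := by exact_mod_cast hN6r
         have s2 := (abs_le.mp (serre 2 (by norm_num))).2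
         push_cast at s2
         norm_num [e4] at s2
         have hN2' : NC 2 ≤ 13 := by omega
         have s3 := (abs_le.mp (serre 3 (by norm_num))).2
         push_cast at s3
         norm_num [e8] at s3
         have f5 : ⌊2 * (2 * Real.sqrt 2)⌋ = 5 := by
           rw [Int.floor_eq_iff]
           constructor <;> push_cast <;> nlinarith
         rw [f5] at s3
         push_cast at s3
         have hN3r : (NC 3 : ℝ) ≤ 19 := by linarith [s3]
         have hN3' : NC 3 ≤ 19 := by exact_mod_cast hN3r
         omega)
      | -- generic small case: evaluate proper divisors and use linear arithmetic in √2, √3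
        (first
          | rw [show (5:ℕ).properDivisors = ({1} : Finset ℕ) from by decide] at hexc
          | rw [show (6:ℕ).properDivisors = ({1,2,3} : Finset ℕ) from by decide] at hexc
          | rw [show (7:ℕ).properDivisors = ({1} : Finset ℕ) from by decide] at hexc
          | rw [show (8:ℕ).properDivisors = ({1,2,4} : Finset ℕ) from by decide] at hexc
          | rw [show (9:ℕ).properDivisors = ({1,3} : Finset ℕ) from by decide] at hexc
         norm_num [Finset.sum_insert, Finset.mem_insert, Finset.mem_singleton,
           Finset.sum_singleton] at hexc
         push_cast at hexc
         nlinarith [hexc, hr0, ht0, hr142, ht174, e4, e8, e16, e32, e64, e128, e256, e512,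
           e9, e27, e243, e729])
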